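/- Let C > 0, δ_min ≥ 0, and let δ₀, δ₊, δ₋ be real with δ₊ > δ₀ > δ_min and δ₋ > δ₀. Set ε = √((δ₊ − δ₀)·(δ₋ − δ₀)), R₅ = (δ₀ − δ_min − ε)/(log(2)·C), R_A = (δ₊ − δ₀ + ε)/(log(2)·C), R_B = (δ₋ − δ₀ + ε)/(log(2)·C), and assume R₅ ≥ 0. Then R_A, R_B > 0 and the following three matching equations hold: (i) δ₀ − δ_min = log(2)·C·(R₅ + R_A·R_B/(R_A + R_B)); (ii) δ₊ − δ_min = log(2)·C·(R₅ + R_A); (iii) δ₋ − δ_min = log(2)·C·(R₅ + R_B). -/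

import Mathlib

/-- Model parametrization for interconnect-augmented NOR gates (falling-output case):
the chosen `R₅`, `R_A`, `R_B` satisfy the three matching equations. -/
theorem stmt_7 (C δmin δ₀ δp δm : ℝ) (hC : 0 < C) (hδmin : 0 ≤ δmin)
    (h1 : δ₀ < δp) (h2 : δmin < δ₀) (h3 : δ₀ < δm) :
    let ε : ℝ := Real.sqrt ((δp - δ₀) * (δm - δ₀))
    let R₅ : ℝ := (δ₀ - δmin - ε) / (Real.log 2 * C)
    let RA : ℝ := (δp - δ₀ + ε) / (Real.log 2 * C)
    let RB : ℝ := (δm - δ₀ + ε) / (Real.log 2 * C)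
    0 ≤ R₅ →
      (0 < RA ∧ 0 < RB) ∧
      δ₀ - δmin = Real.log 2 * C * (R₅ + RA * RB / (RA + RB)) ∧
      δp - δmin = Real.log 2 * C * (R₅ + RA) ∧
      δm - δmin = Real.log 2 * C * (R₅ + RB) := by
  intro ε R₅ RA RB _
  have hL : 0 < Real.log 2 * C := mul_pos (Real.log_pos one_lt_two) hC
  have hεpos : 0 < ε := Real.sqrt_pos.mpr (mul_pos (by linarith) (by linarith))
  have hεsq : ε * ε = (δp - δ₀) * (δm - δ₀) :=
    Real.mul_self_sqrt (le_of_lt (mul_pos (by linarith) (by linarith)))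
  have hRA : 0 < RA := div_pos (by linarith) hL
  have hRB : 0 < RB := div_pos (by linarith) hL
  refine ⟨⟨hRA, hRB⟩, ?_, ?_, ?_⟩
  · have hLne : Real.log 2 * C ≠ 0 := ne_of_gt hL
    have hSpos : (0:ℝ) < δp - δ₀ + (δm - δ₀) + 2 * ε := by linarith
    have hs : RA + RB = (δp - δ₀ + (δm - δ₀) + 2 * ε) / (Real.log 2 * C) := by
      simp only [RA, RB]; field_simp; ring
    have hnum : RA * RB =
        ε * (δp - δ₀ + (δm - δ₀) + 2 * ε) / ((Real.log 2 * C) * (Real.log 2 * C)) := by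
      simp only [RA, RB, div_mul_div_comm]
      congr 1
      nlinarith [hεsq]
    have key : RA * RB / (RA + RB) = ε / (Real.log 2 * C) := by
      rw [hnum, hs]
      rw [div_div_div_eq, div_eq_div_iff (mul_pos (mul_pos hL hL) hSpos).ne' hLne]
      ring
    show δ₀ - δmin = Real.log 2 * C * (R₅ + RA * RB / (RA + RB))
    rw [key]
    simp only [R₅]
    field_simp
    ring
  · show δp - δmin = Real.log 2 * C * (R₅ + RA)
    simp only [R₅, RA]
    field_simp
    ring
  · show δm - δmin = Real.log 2 * C * (R₅ + RB)
    simp only [R₅, RB]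
    field_simp
    ring
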